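/- Let n, p be positive natural numbers, let Z = ℝ^{n×p} with the Frobenius norm, let X be a finite-dimensional real normed space, and let D : Z → X be L_D-Lipschitz for some L_D ≥ 0. Let T be a real n×n matrix with Tᵀ·T ⪯ κ·I for some κ ≥ 1. Let Y_o and P_o be random elements of Z on a common probability space with E := P_o − Y_o satisfying 𝔼‖E‖_F² < ∞. Let P_g = law(D(T·P_o), T·P_o) and P_g* = law(D(T·Y_o), T·Y_o) in X × Z, equipped with the pair metric d((x,y),(x',y')) = ‖x−x'‖ + ‖y−y'‖_F. Then W₁(P_g, P_g*) ≤ (1 + L_D)·𝔼‖T·E‖_F ≤ (1 + L_D)·√(κ·𝔼‖E‖_F²). -/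

import Mathlib

open Matrix MeasureTheory

/-- Matrices carry the product (entrywise) measurable structure. -/
instance matrixMeasurableSpace {m k : Type*} : MeasurableSpace (Matrix m k ℝ) :=
  inferInstanceAs (MeasurableSpace (m → k → ℝ))

/-- The Frobenius norm of a real matrix. -/
noncomputable def frob {n p : ℕ} (M : Matrix (Fin n) (Fin p) ℝ) : ℝ :=
  Real.sqrt (∑ i, ∑ j, (M i j) ^ 2)

/-- The 1-Wasserstein distance with respect to a cost function `d`: the infimum, over all
couplings `π` of `P` and `Q` (with integrable cost), of `∫ d(z, z') dπ(z, z')`. -/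
noncomputable def W1 {S : Type*} [MeasurableSpace S] (d : S → S → ℝ)
    (P Q : Measure S) : ℝ :=
  sInf {c : ℝ | ∃ π : Measure (S × S), IsProbabilityMeasure π ∧
    π.map Prod.fst = P ∧ π.map Prod.snd = Q ∧
    Integrable (fun z : S × S => d z.1 z.2) π ∧ c = ∫ z : S × S, d z.1 z.2 ∂π}

instance matrixBorelSpace {m k : ℕ} : BorelSpace (Matrix (Fin m) (Fin k) ℝ) :=
  inferInstanceAs (BorelSpace (Fin m → Fin k → ℝ))

instance matrixSecondCountable {m k : ℕ} :
    SecondCountableTopology (Matrix (Fin m) (Fin k) ℝ) :=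
  inferInstanceAs (SecondCountableTopology (Fin m → Fin k → ℝ))

instance matrixMeasurableSub {m k : ℕ} : MeasurableSub₂ (Matrix (Fin m) (Fin k) ℝ) :=
  inferInstanceAs (MeasurableSub₂ (Fin m → Fin k → ℝ))

lemma frob_nonneg {n p : ℕ} (M : Matrix (Fin n) (Fin p) ℝ) : 0 ≤ frob M :=
  Real.sqrt_nonneg _

lemma frob_continuous {n p : ℕ} : Continuous (frob (n := n) (p := p)) := by
  apply Real.continuous_sqrt.comp
  exact continuous_finset_sum _ fun i _ => continuous_finset_sum _ fun j _ =>
    (((continuous_apply j).comp (continuous_apply i)).pow 2)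

lemma frob_zero {n p : ℕ} : frob (0 : Matrix (Fin n) (Fin p) ℝ) = 0 := by
  simp [frob]

lemma mulT_continuous {n p : ℕ} (T : Matrix (Fin n) (Fin n) ℝ) :
    Continuous (fun M : Matrix (Fin n) (Fin p) ℝ => T * M) := by
  refine continuous_pi fun i => continuous_pi fun j => ?_
  simp only [mul_apply]
  exact continuous_finset_sum _ fun k _ =>
    continuous_const.mul ((continuous_apply j).comp (continuous_apply k))

lemma aux_vec {n : ℕ} (T : Matrix (Fin n) (Fin n) ℝ) (κ : ℝ)
    (hT : (κ • (1 : Matrix (Fin n) (Fin n) ℝ) - Tᵀ * T).PosSemidef)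
    (v : Fin n → ℝ) : ∑ i, (T *ᵥ v) i ^ 2 ≤ κ * ∑ i, v i ^ 2 := by
  have h := hT.dotProduct_mulVec_nonneg v
  simp only [star_trivial, sub_mulVec, dotProduct_sub, smul_mulVec, one_mulVec,
    dotProduct_smul, smul_eq_mul] at h
  have h2 : v ⬝ᵥ ((Tᵀ * T) *ᵥ v) = (T *ᵥ v) ⬝ᵥ (T *ᵥ v) := by
    rw [← mulVec_mulVec, dotProduct_mulVec, vecMul_transpose]
  rw [h2] at h
  have e1 : (T *ᵥ v) ⬝ᵥ (T *ᵥ v) = ∑ i, (T *ᵥ v) i ^ 2 := by simp [dotProduct, sq]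
  have e2 : v ⬝ᵥ v = ∑ i, v i ^ 2 := by simp [dotProduct, sq]
  rw [e1, e2] at h
  linarith

lemma aux_frob_sq {n p : ℕ} (T : Matrix (Fin n) (Fin n) ℝ) (κ : ℝ)
    (hT : (κ • (1 : Matrix (Fin n) (Fin n) ℝ) - Tᵀ * T).PosSemidef)
    (M : Matrix (Fin n) (Fin p) ℝ) :
    ∑ i, ∑ j, ((T * M) i j) ^ 2 ≤ κ * ∑ i, ∑ j, (M i j) ^ 2 := by
  calc ∑ i, ∑ j, ((T * M) i j) ^ 2 = ∑ j, ∑ i, ((T * M) i j) ^ 2 := Finset.sum_comm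
    _ ≤ ∑ j, κ * ∑ i, (M i j) ^ 2 := by
        refine Finset.sum_le_sum fun j _ => ?_
        simpa [mulVec, mul_apply, dotProduct] using aux_vec T κ hT (fun k => M k j)
    _ = κ * ∑ j, ∑ i, (M i j) ^ 2 := (Finset.mul_sum _ _ _).symm
    _ = κ * ∑ i, ∑ j, (M i j) ^ 2 := by rw [Finset.sum_comm]

lemma aux_frob_le {n p : ℕ} (T : Matrix (Fin n) (Fin n) ℝ) (κ : ℝ) (hκ0 : 0 ≤ κ)
    (hT : (κ • (1 : Matrix (Fin n) (Fin n) ℝ) - Tᵀ * T).PosSemidef)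
    (M : Matrix (Fin n) (Fin p) ℝ) :
    frob (T * M) ≤ Real.sqrt κ * Real.sqrt (∑ i, ∑ j, (M i j) ^ 2) := by
  rw [← Real.sqrt_mul hκ0]
  exact Real.sqrt_le_sqrt (aux_frob_sq T κ hT M)

lemma sqrt_le_one_add (x : ℝ) (hx : 0 ≤ x) : Real.sqrt x ≤ 1 + x := by
  have h1 : Real.sqrt x ≤ Real.sqrt ((1 + x) ^ 2) := Real.sqrt_le_sqrt (by nlinarith)
  rwa [Real.sqrt_sq (by linarith)] at h1

lemma aux_L1L2 {Ω : Type*} [MeasurableSpace Ω] (μ : Measure Ω) [IsProbabilityMeasure μ]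
    (g : Ω → ℝ) (hg : AEStronglyMeasurable g μ) (hnn : ∀ ω, 0 ≤ g ω)
    (h2 : Integrable (fun ω => g ω ^ 2) μ) :
    ∫ ω, g ω ∂μ ≤ Real.sqrt (∫ ω, g ω ^ 2 ∂μ) := by
  have hmem : MemLp g 2 μ := (memLp_two_iff_integrable_sq hg).2 h2
  have hone : MemLp (fun _ : Ω => (1 : ℝ)) 2 μ := memLp_const 1
  have hconj : (2 : ℝ).HolderConjugate 2 := Real.HolderConjugate.two_two
  have := integral_mul_le_Lp_mul_Lq_of_nonneg hconj
    (f := g) (g := fun _ => (1:ℝ)) (Filter.Eventually.of_forall hnn)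
    (Filter.Eventually.of_forall fun _ => zero_le_one) (by simpa using hmem) (by simpa using hone)
  simp only [mul_one, one_pow] at this
  rw [integral_const] at this
  simp at this
  calc ∫ ω, g ω ∂μ ≤ (∫ ω, g ω ^ 2 ∂μ) ^ (1/2 : ℝ) := by simpa using this
    _ = Real.sqrt (∫ ω, g ω ^ 2 ∂μ) := (Real.sqrt_eq_rpow _).symm

/-- generated-branch pair perturbation: with `Z = ℝ^{n×p}` under the
Frobenius norm, `D : Z → X` being `L_D`-Lipschitz, `Tᵀ T ⪯ κ I` with `κ ≥ 1`, and
`E = P_o − Y_o` with `𝔼‖E‖_F² < ∞`, the 1-Wasserstein distance (under the pair metric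
`‖x−x'‖ + ‖y−y'‖_F`) between the law of `(D(T·P_o), T·P_o)` and the law of
`(D(T·Y_o), T·Y_o)` is at most `(1+L_D)·𝔼‖T·E‖_F ≤ (1+L_D)·√(κ·𝔼‖E‖_F²)`. -/
theorem generated_pair_perturbation (n p : ℕ) (hn : 0 < n) (hp : 0 < p)
    {X : Type*} [NormedAddCommGroup X] [NormedSpace ℝ X] [FiniteDimensional ℝ X]
    [MeasurableSpace X] [BorelSpace X]
    (LD : ℝ) (hLD : 0 ≤ LD) (D : Matrix (Fin n) (Fin p) ℝ → X)
    (hD : ∀ z₁ z₂ : Matrix (Fin n) (Fin p) ℝ, ‖D z₁ - D z₂‖ ≤ LD * frob (z₁ - z₂))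
    (T : Matrix (Fin n) (Fin n) ℝ) (κ : ℝ) (hκ : 1 ≤ κ)
    (hT : (κ • (1 : Matrix (Fin n) (Fin n) ℝ) - Tᵀ * T).PosSemidef)
    {Ω : Type*} [MeasurableSpace Ω] (μ : Measure Ω) [IsProbabilityMeasure μ]
    (Yo Po : Ω → Matrix (Fin n) (Fin p) ℝ) (hYo : Measurable Yo) (hPo : Measurable Po)
    (hE2 : Integrable (fun ω => ∑ i, ∑ j, ((Po ω - Yo ω) i j) ^ 2) μ) :
    W1 (fun z z' : X × Matrix (Fin n) (Fin p) ℝ => ‖z.1 - z'.1‖ + frob (z.2 - z'.2))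
        (μ.map (fun ω => (D (T * Po ω), T * Po ω)))
        (μ.map (fun ω => (D (T * Yo ω), T * Yo ω)))
      ≤ (1 + LD) * ∫ ω, frob (T * (Po ω - Yo ω)) ∂μ ∧
    (1 + LD) * ∫ ω, frob (T * (Po ω - Yo ω)) ∂μ
      ≤ (1 + LD) * Real.sqrt (κ * ∫ ω, ∑ i, ∑ j, ((Po ω - Yo ω) i j) ^ 2 ∂μ) := by
  have hκ0 : (0 : ℝ) ≤ κ := le_trans zero_le_one hκ
  haveI : SecondCountableTopology X := secondCountable_of_proper
  have hg_nn : ∀ ω, (0:ℝ) ≤ ∑ i, ∑ j, ((Po ω - Yo ω) i j) ^ 2 := fun ω =>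
    Finset.sum_nonneg fun i _ => Finset.sum_nonneg fun j _ => sq_nonneg _
  -- continuity of D
  have hDcont : Continuous D := by
    rw [continuous_iff_continuousAt]
    intro z
    rw [ContinuousAt, tendsto_iff_norm_sub_tendsto_zero]
    have hb : Continuous (fun z' : Matrix (Fin n) (Fin p) ℝ => LD * frob (z' - z)) :=
      continuous_const.mul (frob_continuous.comp (continuous_id.sub continuous_const))
    have h0 : Filter.Tendsto (fun z' : Matrix (Fin n) (Fin p) ℝ => LD * frob (z' - z))
        (nhds z) (nhds 0) := by
      have := hb.tendsto z
      simpa [frob_zero] using this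
    exact squeeze_zero (fun z' => norm_nonneg _) (fun z' => hD z' z) h0
  -- measurability
  have hEmeas : Measurable (fun ω => Po ω - Yo ω) := hPo.sub hYo
  have hTE : Measurable (fun ω => T * (Po ω - Yo ω)) :=
    (mulT_continuous T).measurable.comp hEmeas
  have hTPo : Measurable (fun ω => T * Po ω) := (mulT_continuous T).measurable.comp hPo
  have hTYo : Measurable (fun ω => T * Yo ω) := (mulT_continuous T).measurable.comp hYo
  have hgmeas : Measurable (fun ω => ∑ i, ∑ j, ((Po ω - Yo ω) i j) ^ 2) := by
    have hc : Continuous (fun M : Matrix (Fin n) (Fin p) ℝ => ∑ i, ∑ j, (M i j) ^ 2) :=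
      continuous_finset_sum _ fun i _ => continuous_finset_sum _ fun j _ =>
        (((continuous_apply j).comp (continuous_apply i)).pow 2)
    exact hc.measurable.comp hEmeas
  have hfrobTE_le : ∀ ω, frob (T * (Po ω - Yo ω)) ≤
      Real.sqrt κ * Real.sqrt (∑ i, ∑ j, ((Po ω - Yo ω) i j) ^ 2) :=
    fun ω => aux_frob_le T κ hκ0 hT _
  have hbound_int : Integrable (fun ω => 1 + ∑ i, ∑ j, ((Po ω - Yo ω) i j) ^ 2) μ :=
    (integrable_const (1:ℝ)).add hE2
  have hsqrtg_int : Integrable (fun ω => Real.sqrt (∑ i, ∑ j, ((Po ω - Yo ω) i j) ^ 2)) μ := by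
    refine Integrable.mono' hbound_int
      (Real.continuous_sqrt.measurable.comp hgmeas).aestronglyMeasurable
      (Filter.Eventually.of_forall fun ω => ?_)
    rw [Real.norm_of_nonneg (Real.sqrt_nonneg _)]
    exact sqrt_le_one_add _ (hg_nn ω)
  have hfrobTE_int : Integrable (fun ω => frob (T * (Po ω - Yo ω))) μ := by
    refine Integrable.mono' (hsqrtg_int.const_mul (Real.sqrt κ))
      ((frob_continuous.measurable.comp hTE)).aestronglyMeasurable
      (Filter.Eventually.of_forall fun ω => ?_)
    rw [Real.norm_of_nonneg (frob_nonneg _)]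
    exact hfrobTE_le ω
  constructor
  · -- Wasserstein bound via the natural coupling
    set c : (X × Matrix (Fin n) (Fin p) ℝ) × (X × Matrix (Fin n) (Fin p) ℝ) → ℝ :=
      fun z => ‖z.1.1 - z.2.1‖ + frob (z.1.2 - z.2.2) with hc_def
    have hccont : Continuous c := by
      apply Continuous.add
      · exact (continuous_fst.fst.sub continuous_snd.fst).norm
      · exact frob_continuous.comp (continuous_fst.snd.sub continuous_snd.snd)
    set f : Ω → (X × Matrix (Fin n) (Fin p) ℝ) × (X × Matrix (Fin n) (Fin p) ℝ) :=
      fun ω => ((D (T * Po ω), T * Po ω), (D (T * Yo ω), T * Yo ω)) with hf_def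
    have hfmeas : Measurable f :=
      (((hDcont.measurable.comp hTPo).prodMk hTPo).prodMk
        ((hDcont.measurable.comp hTYo).prodMk hTYo))
    have hcf_bound : ∀ ω, c (f ω) ≤ (1 + LD) * frob (T * (Po ω - Yo ω)) := by
      intro ω
      have hsub : T * Po ω - T * Yo ω = T * (Po ω - Yo ω) := (Matrix.mul_sub T _ _).symm
      have hd := hD (T * Po ω) (T * Yo ω)
      rw [hsub] at hd
      simp only [hc_def, hf_def]
      rw [hsub]
      nlinarith [frob_nonneg (T * (Po ω - Yo ω))]
    have hcf_int : Integrable (fun ω => c (f ω)) μ := by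
      refine Integrable.mono' (hfrobTE_int.const_mul (1 + LD))
        ((hccont.measurable.comp hfmeas)).aestronglyMeasurable
        (Filter.Eventually.of_forall fun ω => ?_)
      have hnn : 0 ≤ c (f ω) := add_nonneg (norm_nonneg _) (frob_nonneg _)
      rw [Real.norm_of_nonneg hnn]
      exact hcf_bound ω
    have hπ : IsProbabilityMeasure (μ.map f) := Measure.isProbabilityMeasure_map hfmeas.aemeasurable
    have hint_map : Integrable c (μ.map f) :=
      (integrable_map_measure hccont.aestronglyMeasurable hfmeas.aemeasurable).2 hcf_int
    have hval : ∫ z, c z ∂(μ.map f) = ∫ ω, c (f ω) ∂μ :=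
      integral_map hfmeas.aemeasurable hccont.aestronglyMeasurable
    have hW : W1 (fun z z' : X × Matrix (Fin n) (Fin p) ℝ => ‖z.1 - z'.1‖ + frob (z.2 - z'.2))
        (μ.map (fun ω => (D (T * Po ω), T * Po ω)))
        (μ.map (fun ω => (D (T * Yo ω), T * Yo ω))) ≤ ∫ z, c z ∂(μ.map f) := by
      unfold W1
      apply csInf_le
      · refine ⟨0, fun r hr => ?_⟩
        obtain ⟨π, _, _, _, _, hr⟩ := hr
        rw [hr]
        exact integral_nonneg fun z => add_nonneg (norm_nonneg _) (frob_nonneg _)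
      · refine ⟨μ.map f, hπ, ?_, ?_, hint_map, rfl⟩
        · rw [Measure.map_map measurable_fst hfmeas]; rfl
        · rw [Measure.map_map measurable_snd hfmeas]; rfl
    refine le_trans hW ?_
    rw [hval]
    calc ∫ ω, c (f ω) ∂μ ≤ ∫ ω, (1 + LD) * frob (T * (Po ω - Yo ω)) ∂μ :=
          integral_mono hcf_int (hfrobTE_int.const_mul _) hcf_bound
      _ = (1 + LD) * ∫ ω, frob (T * (Po ω - Yo ω)) ∂μ := integral_const_mul _ _
  · -- second inequality
    have h1LD : (0:ℝ) ≤ 1 + LD := by linarith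
    refine mul_le_mul_of_nonneg_left ?_ h1LD
    have step1 : ∫ ω, frob (T * (Po ω - Yo ω)) ∂μ ≤
        Real.sqrt κ * ∫ ω, Real.sqrt (∑ i, ∑ j, ((Po ω - Yo ω) i j) ^ 2) ∂μ := by
      rw [← integral_const_mul]
      exact integral_mono hfrobTE_int (hsqrtg_int.const_mul _) hfrobTE_le
    have step2 : ∫ ω, Real.sqrt (∑ i, ∑ j, ((Po ω - Yo ω) i j) ^ 2) ∂μ ≤
        Real.sqrt (∫ ω, ∑ i, ∑ j, ((Po ω - Yo ω) i j) ^ 2 ∂μ) := by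
      have h := aux_L1L2 μ (fun ω => Real.sqrt (∑ i, ∑ j, ((Po ω - Yo ω) i j) ^ 2))
        (Real.continuous_sqrt.measurable.comp hgmeas).aestronglyMeasurable
        (fun ω => Real.sqrt_nonneg _)
        (hE2.congr (Filter.Eventually.of_forall fun ω => (Real.sq_sqrt (hg_nn ω)).symm))
      refine le_trans h (Real.sqrt_le_sqrt (le_of_eq ?_))
      exact integral_congr_ae (Filter.Eventually.of_forall fun ω => Real.sq_sqrt (hg_nn ω))
    calc ∫ ω, frob (T * (Po ω - Yo ω)) ∂μ
        ≤ Real.sqrt κ * ∫ ω, Real.sqrt (∑ i, ∑ j, ((Po ω - Yo ω) i j) ^ 2) ∂μ := step1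
      _ ≤ Real.sqrt κ * Real.sqrt (∫ ω, ∑ i, ∑ j, ((Po ω - Yo ω) i j) ^ 2 ∂μ) :=
          mul_le_mul_of_nonneg_left step2 (Real.sqrt_nonneg _)
      _ = Real.sqrt (κ * ∫ ω, ∑ i, ∑ j, ((Po ω - Yo ω) i j) ^ 2 ∂μ) :=
          (Real.sqrt_mul hκ0 _).symm
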